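/- arXiv:1008.2233 — 6 statements merged into one kernel-verified Lean document; each statement's English description precedes it below -/
import Mathlib

section
/- For every integer g ≥ 2, 4·arccosh(1/(2·sin(π(g+1)/(12g)))) < 2·log(3 + 2√3 + 2·√(5 + 3√3)). -/
open Real

noncomputable def arccosh (x : ℝ) : ℝ := Real.log (x + Real.sqrt (x ^ 2 - 1))
noncomputable def arctanh (x : ℝ) : ℝ := Real.log ((1 + x) / (1 - x)) / 2

lemma bavard_aux2 (y : ℝ) (h1 : 1 < y) (h2 : y < (Real.sqrt 6 + Real.sqrt 2) / 2) :
    4 * arccosh y <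
      2 * Real.log (3 + 2 * Real.sqrt 3 + 2 * Real.sqrt (5 + 3 * Real.sqrt 3)) := by
  have s2 : Real.sqrt 2 ^ 2 = 2 := Real.sq_sqrt (by norm_num)
  have s3 : Real.sqrt 3 ^ 2 = 3 := Real.sq_sqrt (by norm_num)
  have s6 : Real.sqrt 6 ^ 2 = 6 := Real.sq_sqrt (by norm_num)
  have s2n : (0:ℝ) ≤ Real.sqrt 2 := Real.sqrt_nonneg 2
  have s3n : (0:ℝ) ≤ Real.sqrt 3 := Real.sqrt_nonneg 3
  have s6n : (0:ℝ) ≤ Real.sqrt 6 := Real.sqrt_nonneg 6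
  have s62 : Real.sqrt 6 * Real.sqrt 2 = 2 * Real.sqrt 3 := by
    rw [← Real.sqrt_mul (by norm_num)]
    rw [show (6:ℝ) * 2 = 2^2 * 3 by norm_num]
    rw [Real.sqrt_mul (by positivity), Real.sqrt_sq (by norm_num)]
  have hysq : y ^ 2 < 2 + Real.sqrt 3 := by nlinarith
  have hy2m1 : (0:ℝ) ≤ y ^ 2 - 1 := by nlinarith
  have hsqy : Real.sqrt (y ^ 2 - 1) ^ 2 = y ^ 2 - 1 := Real.sq_sqrt hy2m1
  have hsqyn : (0:ℝ) ≤ Real.sqrt (y ^ 2 - 1) := Real.sqrt_nonneg _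
  have hkey : y * Real.sqrt (y ^ 2 - 1) < Real.sqrt (5 + 3 * Real.sqrt 3) := by
    have h1' : y * Real.sqrt (y ^ 2 - 1) = Real.sqrt (y ^ 2 * (y ^ 2 - 1)) := by
      rw [Real.sqrt_mul (by positivity), Real.sqrt_sq (by linarith)]
    rw [h1']
    apply Real.sqrt_lt_sqrt (by positivity)
    nlinarith
  have hs53n : (0:ℝ) ≤ Real.sqrt (5 + 3 * Real.sqrt 3) := Real.sqrt_nonneg _
  have hb1 : 1 < y + Real.sqrt (y ^ 2 - 1) := by linarith
  have hbsq : (y + Real.sqrt (y ^ 2 - 1)) ^ 2 <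
      3 + 2 * Real.sqrt 3 + 2 * Real.sqrt (5 + 3 * Real.sqrt 3) := by nlinarith
  have hlog : Real.log ((y + Real.sqrt (y ^ 2 - 1)) ^ 2) <
      Real.log (3 + 2 * Real.sqrt 3 + 2 * Real.sqrt (5 + 3 * Real.sqrt 3)) :=
    Real.log_lt_log (by positivity) hbsq
  rw [Real.log_pow] at hlog
  push_cast at hlog
  rw [arccosh]
  linarith

lemma bavard_aux (s : ℝ) (h1 : (Real.sqrt 6 - Real.sqrt 2) / 4 < s) (h2 : s < 1 / 2) :
    4 * arccosh (1 / (2 * s)) <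
      2 * Real.log (3 + 2 * Real.sqrt 3 + 2 * Real.sqrt (5 + 3 * Real.sqrt 3)) := by
  have s2 : Real.sqrt 2 ^ 2 = 2 := Real.sq_sqrt (by norm_num)
  have s6 : Real.sqrt 6 ^ 2 = 6 := Real.sq_sqrt (by norm_num)
  have s2n : (0:ℝ) ≤ Real.sqrt 2 := Real.sqrt_nonneg 2
  have s26 : Real.sqrt 2 < Real.sqrt 6 := by
    apply Real.sqrt_lt_sqrt <;> norm_num
  have hspos : 0 < s := by nlinarith
  apply bavard_aux2
  · rw [lt_div_iff₀ (by positivity)]; linarith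
  · rw [div_lt_div_iff₀ (by positivity) (by norm_num)]
    nlinarith [mul_lt_mul_of_pos_left h1
      (show (0:ℝ) < Real.sqrt 6 + Real.sqrt 2 by nlinarith)]

theorem bavard_bound (g : ℤ) (hg : 2 ≤ g) :
    4 * arccosh (1 / (2 * Real.sin (Real.pi * ((g : ℝ) + 1) / (12 * (g : ℝ))))) <
      2 * Real.log (3 + 2 * Real.sqrt 3 + 2 * Real.sqrt (5 + 3 * Real.sqrt 3)) := by
  have hG : (2:ℝ) ≤ (g:ℝ) := by exact_mod_cast hg
  have hGpos : (0:ℝ) < (g:ℝ) := by linarith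
  have hpi := Real.pi_pos
  apply bavard_aux
  · -- (√6 - √2)/4 = sin (π/12) < sin θ
    have hs12 : Real.sin (Real.pi / 12) = (Real.sqrt 6 - Real.sqrt 2) / 4 := by
      have h : (Real.pi / 12 : ℝ) = Real.pi / 4 - Real.pi / 6 := by ring
      rw [h, Real.sin_sub, Real.sin_pi_div_four, Real.cos_pi_div_four,
        Real.sin_pi_div_six, Real.cos_pi_div_six]
      have s62 : Real.sqrt 6 * Real.sqrt 2 = 2 * Real.sqrt 3 := by
        rw [← Real.sqrt_mul (by norm_num)]
        rw [show (6:ℝ) * 2 = 2^2 * 3 by norm_num]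
        rw [Real.sqrt_mul (by positivity), Real.sqrt_sq (by norm_num)]
      have s23 : Real.sqrt 2 * Real.sqrt 3 = Real.sqrt 6 := by
        rw [← Real.sqrt_mul (by norm_num)]; norm_num
      nlinarith [s23]
    rw [← hs12]
    apply Real.strictMonoOn_sin
    · constructor <;> nlinarith
    · constructor
      · have h0 : (0:ℝ) ≤ Real.pi * ((g:ℝ) + 1) / (12 * (g:ℝ)) := by positivity
        linarith
      · rw [div_le_div_iff₀ (by positivity) (by norm_num)]; nlinarith
    · rw [div_lt_div_iff₀ (by norm_num) (by positivity)]; nlinarith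
  · -- sin θ < 1/2 = sin (π/6)
    rw [show (1:ℝ)/2 = Real.sin (Real.pi / 6) by rw [Real.sin_pi_div_six]]
    apply Real.strictMonoOn_sin
    · constructor
      · have h0 : (0:ℝ) ≤ Real.pi * ((g:ℝ) + 1) / (12 * (g:ℝ)) := by positivity
        linarith
      · rw [div_le_div_iff₀ (by positivity) (by norm_num)]; nlinarith
    · constructor <;> nlinarith
    · rw [div_lt_div_iff₀ (by positivity) (by norm_num)]; nlinarith
end

section
/- For all real γ > 0 and w > 0, 2·arccosh(sinh(γ/2)^2·(cosh(2w) − 1) − 1) < 2γ + 4w, provided sinh(γ/2)^2·(cosh(2w) − 1) − 1 ≥ 1. -/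
open Real

theorem nu_exact_lt_homotopy_bound (γ w : ℝ) (hγ : 0 < γ) (hw : 0 < w)
    (h : Real.sinh (γ / 2) ^ 2 * (Real.cosh (2 * w) - 1) - 1 ≥ 1) :
    2 * arccosh (Real.sinh (γ / 2) ^ 2 * (Real.cosh (2 * w) - 1) - 1) < 2 * γ + 4 * w := by
  set x : ℝ := Real.sinh (γ / 2) ^ 2 * (Real.cosh (2 * w) - 1) - 1 with hx
  clear_value x
  have hx1 : (1 : ℝ) ≤ x := h
  have hxpos : (0 : ℝ) < x := by linarith
  have hsqrt : Real.sqrt (x ^ 2 - 1) ≤ x := by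
    calc Real.sqrt (x ^ 2 - 1) ≤ Real.sqrt (x ^ 2) := by
          apply Real.sqrt_le_sqrt; linarith
      _ = x := by rw [Real.sqrt_sq hxpos.le]
  -- bound 2x < exp(γ + 2w)
  have hs : Real.sinh (γ / 2) < Real.exp (γ / 2) / 2 := by
    rw [Real.sinh_eq]
    have := Real.exp_pos (-(γ / 2))
    nlinarith
  have hspos : 0 < Real.sinh (γ / 2) := Real.sinh_pos_iff.mpr (by linarith)
  have hc : Real.cosh (2 * w) < Real.exp (2 * w) := by
    rw [Real.cosh_eq]
    have h1 : Real.exp (-(2 * w)) < Real.exp (2 * w) := Real.exp_lt_exp.mpr (by linarith)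
    linarith
  have hcpos : (0 : ℝ) < Real.cosh (2 * w) := Real.cosh_pos _
  have hexp : Real.exp (γ / 2) * Real.exp (γ / 2) * Real.exp (2 * w) = Real.exp (γ + 2 * w) := by
    rw [← Real.exp_add, ← Real.exp_add]; ring_nf
  have h2x : 2 * x < Real.exp (γ + 2 * w) := by
    have hxlt : x < Real.sinh (γ / 2) ^ 2 * Real.cosh (2 * w) := by
      have : Real.sinh (γ / 2) ^ 2 > 0 := by positivity
      nlinarith
    have hb : Real.sinh (γ / 2) ^ 2 * Real.cosh (2 * w) <
        (Real.exp (γ / 2) / 2) ^ 2 * Real.exp (2 * w) := by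
      have he : 0 < Real.exp (2 * w) := Real.exp_pos _
      have hs2 : Real.sinh (γ / 2) ^ 2 < (Real.exp (γ / 2) / 2) ^ 2 := by nlinarith
      calc Real.sinh (γ / 2) ^ 2 * Real.cosh (2 * w)
          < (Real.exp (γ / 2) / 2) ^ 2 * Real.cosh (2 * w) := by
            exact mul_lt_mul_of_pos_right hs2 hcpos
        _ < (Real.exp (γ / 2) / 2) ^ 2 * Real.exp (2 * w) := by
            exact mul_lt_mul_of_pos_left hc (by positivity)
    have : (Real.exp (γ / 2) / 2) ^ 2 * Real.exp (2 * w) = Real.exp (γ + 2 * w) / 4 := by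
      rw [← hexp]; ring
    have hpos := Real.exp_pos (γ + 2 * w)
    rw [this] at hb; linarith
  have hsum : x + Real.sqrt (x ^ 2 - 1) < Real.exp (γ + 2 * w) := by linarith
  have hlog : arccosh x < γ + 2 * w := by
    have hposum : 0 < x + Real.sqrt (x ^ 2 - 1) := by
      have := Real.sqrt_nonneg (x ^ 2 - 1); linarith
    calc arccosh x = Real.log (x + Real.sqrt (x ^ 2 - 1)) := rfl
      _ < Real.log (Real.exp (γ + 2 * w)) := Real.log_lt_log hposum hsum
      _ = γ + 2 * w := Real.log_exp _
  linarith
end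

section
/- For every integer g ≥ 2 and every real γ with π/2 ≤ γ ≤ 2·log(4g−2), γ/2 + 2·arcsinh(2π(g−1)/γ) < 3·log(8g−7). -/
lemma arsinh_le_log (x : ℝ) (hx : 0 ≤ x) : Real.arsinh x ≤ Real.log (2 * x + 1) := by
  rw [Real.arsinh]
  apply Real.log_le_log (by positivity)
  have h : Real.sqrt (1 + x ^ 2) ≤ x + 1 := by
    have h2 := Real.sqrt_le_sqrt (show 1 + x ^ 2 ≤ (x + 1) ^ 2 by nlinarith)
    rwa [Real.sqrt_sq (by linarith)] at h2
  linarith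

theorem gamma2_moderate_bound (g : ℤ) (hg : 2 ≤ g) (γ : ℝ)
    (h1 : Real.pi / 2 ≤ γ) (h2 : γ ≤ 2 * Real.log (4 * (g : ℝ) - 2)) :
    γ / 2 + 2 * Real.arsinh (2 * Real.pi * ((g : ℝ) - 1) / γ) <
      3 * Real.log (8 * (g : ℝ) - 7) := by
  have hg1 : (1:ℝ) ≤ (g : ℝ) - 1 := by
    have : (2:ℝ) ≤ (g:ℝ) := by exact_mod_cast hg
    linarith
  have hπ := Real.pi_pos
  have hγ : 0 < γ := by linarith
  have hxy : 2 * Real.pi * ((g : ℝ) - 1) / γ ≤ 4 * ((g : ℝ) - 1) := by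
    rw [div_le_iff₀ hγ]
    nlinarith
  have hx0 : 0 ≤ 2 * Real.pi * ((g : ℝ) - 1) / γ := by positivity
  have ha : Real.arsinh (2 * Real.pi * ((g : ℝ) - 1) / γ)
      ≤ Real.log (8 * (g : ℝ) - 7) := by
    calc Real.arsinh (2 * Real.pi * ((g : ℝ) - 1) / γ)
        ≤ Real.arsinh (4 * ((g : ℝ) - 1)) := Real.arsinh_le_arsinh.2 hxy
      _ ≤ Real.log (2 * (4 * ((g : ℝ) - 1)) + 1) := arsinh_le_log _ (by linarith)
      _ = Real.log (8 * (g : ℝ) - 7) := by ring_nf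
  have hlog : Real.log (4 * (g : ℝ) - 2) < Real.log (8 * (g : ℝ) - 7) :=
    Real.log_lt_log (by linarith) (by linarith)
  linarith
end

section
/- For every integer g ≥ 2 and every real γ with 0 < γ < π/2, 2·arccosh(sinh(γ/2)^2·(cosh(2·arcsinh(2π(g−1)/γ)) − 1) − 1) ≤ 4·log(8g−7), provided the argument of arccosh is at least 1. -/
open Real

/-- Cubic upper bound on sinh on [0,1]. -/
lemma sinh_le_cubic {x : ℝ} (hx : 0 ≤ x) (hx1 : x ≤ 1) :
    Real.sinh x ≤ x + 2 * x ^ 3 / 9 := by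
  have habs : |x| ≤ 1 := by rwa [abs_of_nonneg hx]
  have habs' : |(-x)| ≤ 1 := by rwa [abs_neg]
  have h1 := Real.exp_bound habs (n := 3) (by norm_num)
  have h2 := Real.exp_bound habs' (n := 3) (by norm_num)
  have hsum : ∑ m ∈ Finset.range 3, x ^ m / (m.factorial : ℝ) = 1 + x + x ^ 2 / 2 := by
    norm_num [Finset.sum_range_succ, Nat.factorial]
  have hsum' : ∑ m ∈ Finset.range 3, (-x) ^ m / (m.factorial : ℝ) = 1 - x + x ^ 2 / 2 := by
    norm_num [Finset.sum_range_succ, Nat.factorial]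
    ring
  rw [hsum, abs_of_nonneg hx] at h1
  rw [hsum', abs_neg, abs_of_nonneg hx] at h2
  have e1 : Real.exp x ≤ 1 + x + x ^ 2 / 2 + x ^ 3 * (4 / 18) := by
    have := (abs_sub_le_iff.1 h1).1
    norm_num [Nat.factorial] at this ⊢
    linarith
  have e2 : 1 - x + x ^ 2 / 2 - x ^ 3 * (4 / 18) ≤ Real.exp (-x) := by
    have := (abs_sub_le_iff.1 h2).2
    norm_num [Nat.factorial] at this ⊢
    linarith
  rw [Real.sinh_eq]
  nlinarith [e1, e2]

set_option maxHeartbeats 1000000 in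
theorem nu_config1_small_systole (g : ℤ) (hg : 2 ≤ g) (γ : ℝ)
    (h1 : 0 < γ) (h2 : γ < Real.pi / 2)
    (h3 : Real.sinh (γ / 2) ^ 2 *
        (Real.cosh (2 * Real.arsinh (2 * Real.pi * ((g : ℝ) - 1) / γ)) - 1) - 1 ≥ 1) :
    2 * arccosh (Real.sinh (γ / 2) ^ 2 *
        (Real.cosh (2 * Real.arsinh (2 * Real.pi * ((g : ℝ) - 1) / γ)) - 1) - 1) ≤
      4 * Real.log (8 * (g : ℝ) - 7) := by
  set t : ℝ := 2 * Real.pi * ((g : ℝ) - 1) / γ with ht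
  set X : ℝ := Real.sinh (γ / 2) ^ 2 * (Real.cosh (2 * Real.arsinh t) - 1) - 1 with hX
  have hgR : (2 : ℝ) ≤ (g : ℝ) := by exact_mod_cast hg
  have hX1 : (1 : ℝ) ≤ X := h3
  -- Simplify X
  have hcosh : Real.cosh (2 * Real.arsinh t) - 1 = 2 * t ^ 2 := by
    rw [Real.cosh_two_mul, Real.cosh_sq, Real.sinh_arsinh]
    ring
  have hXval : X = 2 * Real.sinh (γ / 2) ^ 2 * t ^ 2 - 1 := by
    rw [hX, hcosh]; ring
  -- bound sinh (γ/2)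
  have hπ : Real.pi < 3.15 := Real.pi_lt_d2
  have hπ3 : 3 < Real.pi := by linarith [Real.pi_gt_three]
  have hγ2 : γ / 2 ≤ 1 := by nlinarith
  have hs : Real.sinh (γ / 2) ≤ γ / 2 + 2 * (γ / 2) ^ 3 / 9 :=
    sinh_le_cubic (by linarith) hγ2
  have hsnn : 0 ≤ Real.sinh (γ / 2) := Real.sinh_nonneg_iff.2 (by linarith)
  -- key numeric bound: 2X ≤ (8g-7)^2
  have hkey : 2 * X ≤ (8 * (g : ℝ) - 7) ^ 2 := by
    rw [hXval, ht]
    have hsq : Real.sinh (γ / 2) ^ 2 * (2 * Real.pi * ((g : ℝ) - 1) / γ) ^ 2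
        ≤ (γ / 2 + 2 * (γ / 2) ^ 3 / 9) ^ 2 * (2 * Real.pi * ((g : ℝ) - 1) / γ) ^ 2 := by
      gcongr
    have hγπ : γ < Real.pi / 2 := h2
    have hexp : (γ / 2 + 2 * (γ / 2) ^ 3 / 9) ^ 2 * (2 * Real.pi * ((g : ℝ) - 1) / γ) ^ 2
        = (1 + γ ^ 2 / 18) ^ 2 * Real.pi ^ 2 * ((g : ℝ) - 1) ^ 2 := by
      field_simp
      ring
    rw [hexp] at hsq
    have hc : (1 + γ ^ 2 / 18) ^ 2 * Real.pi ^ 2 ≤ 16 := by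
      have hπ2 : Real.pi ^ 2 ≤ 9.9225 := by nlinarith
      have hγ2' : γ ^ 2 ≤ 2.480625 := by nlinarith
      have hA : (1 + γ ^ 2 / 18) ^ 2 ≤ 1.3 := by nlinarith [sq_nonneg γ]
      calc (1 + γ ^ 2 / 18) ^ 2 * Real.pi ^ 2 ≤ 1.3 * 9.9225 :=
            mul_le_mul hA hπ2 (sq_nonneg _) (by norm_num)
        _ ≤ 16 := by norm_num
    have h16 : (1 + γ ^ 2 / 18) ^ 2 * Real.pi ^ 2 * ((g : ℝ) - 1) ^ 2
        ≤ 16 * ((g : ℝ) - 1) ^ 2 := mul_le_mul_of_nonneg_right hc (sq_nonneg _)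
    nlinarith [hsq, h16, hgR]
  -- now the log chain
  have hXpos : 0 < X := by linarith
  have hsqrt : Real.sqrt (X ^ 2 - 1) ≤ X := by
    calc Real.sqrt (X ^ 2 - 1) ≤ Real.sqrt (X ^ 2) := by
          apply Real.sqrt_le_sqrt; linarith
      _ = X := by rw [Real.sqrt_sq hXpos.le]
  have hg9 : (9 : ℝ) ≤ 8 * (g : ℝ) - 7 := by linarith
  have hlog : Real.log (X + Real.sqrt (X ^ 2 - 1)) ≤ 2 * Real.log (8 * (g : ℝ) - 7) := by
    calc Real.log (X + Real.sqrt (X ^ 2 - 1)) ≤ Real.log (2 * X) := by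
          apply Real.log_le_log (by nlinarith [Real.sqrt_nonneg (X ^ 2 - 1)]); linarith
      _ ≤ Real.log ((8 * (g : ℝ) - 7) ^ 2) := by
          apply Real.log_le_log (by linarith); linarith
      _ = 2 * Real.log (8 * (g : ℝ) - 7) := by
          rw [Real.log_pow]; push_cast; ring
  unfold arccosh
  linarith
end

section
/- For every integer g ≥ 2 and every real γ with 0 < γ < π/2, 2·arccosh(sinh(γ/4)·(2π(g−1)/γ)) ≤ 3·log(8g−7), provided sinh(γ/4)·(2π(g−1)/γ) ≥ 1. -/
open Real

lemma sinh_le_mul_exp {t : ℝ} (ht : 0 ≤ t) : Real.sinh t ≤ t * Real.exp t := by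
  rw [Real.sinh_eq]
  have h1 : (-(2*t)) + 1 ≤ Real.exp (-(2*t)) := Real.add_one_le_exp _
  have h2 : Real.exp (-(2*t)) = Real.exp (-t) * Real.exp (-t) := by
    rw [← Real.exp_add]; ring_nf
  have h3 : Real.exp (-t) * Real.exp t = 1 := by
    rw [← Real.exp_add]; simp
  nlinarith [Real.exp_pos t, Real.exp_pos (-t),
    mul_le_mul_of_nonneg_left h1 (Real.exp_pos t).le]

theorem nu1_config2_small_systole (g : ℤ) (hg : 2 ≤ g) (γ : ℝ)
    (h1 : 0 < γ) (h2 : γ < Real.pi / 2)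
    (h3 : Real.sinh (γ / 4) * (2 * Real.pi * ((g : ℝ) - 1) / γ) ≥ 1) :
    2 * arccosh (Real.sinh (γ / 4) * (2 * Real.pi * ((g : ℝ) - 1) / γ)) ≤
      3 * Real.log (8 * (g : ℝ) - 7) := by
  have hG : (2 : ℝ) ≤ (g : ℝ) := by exact_mod_cast hg
  set x := Real.sinh (γ / 4) * (2 * Real.pi * ((g : ℝ) - 1) / γ) with hxdef
  have hx1 : (1 : ℝ) ≤ x := h3
  have hxpos : 0 < x := lt_of_lt_of_le one_pos hx1
  -- arccosh x ≤ log (2 * x)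
  have hsqrt : Real.sqrt (x ^ 2 - 1) ≤ x := by
    have : Real.sqrt (x ^ 2 - 1) ≤ Real.sqrt (x ^ 2) :=
      Real.sqrt_le_sqrt (by nlinarith)
    rwa [Real.sqrt_sq hxpos.le] at this
  have harc : arccosh x ≤ Real.log (2 * x) := by
    unfold arccosh
    apply Real.log_le_log (by linarith [Real.sqrt_nonneg (x ^ 2 - 1)])
    linarith
  -- bound x
  have hpi : Real.pi ≤ 3.15 := Real.pi_lt_d2.le
  have he : Real.exp 1 ≤ 2.7182818286 := (Real.exp_one_lt_d9).le
  have hexp : Real.exp (γ / 4) ≤ Real.exp 1 := by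
    apply Real.exp_le_exp.2
    nlinarith [Real.pi_lt_d2.le]
  have hsinh : Real.sinh (γ / 4) ≤ (γ / 4) * Real.exp (γ / 4) :=
    sinh_le_mul_exp (by linarith)
  have hfac : 0 ≤ 2 * Real.pi * ((g : ℝ) - 1) / γ := by
    apply div_nonneg _ h1.le
    nlinarith [Real.pi_pos]
  have hxle : x ≤ (Real.pi / 2) * Real.exp 1 * ((g : ℝ) - 1) := by
    have step1 : x ≤ (γ / 4) * Real.exp (γ / 4) * (2 * Real.pi * ((g : ℝ) - 1) / γ) :=
      mul_le_mul_of_nonneg_right hsinh hfac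
    have step2 : (γ / 4) * Real.exp (γ / 4) * (2 * Real.pi * ((g : ℝ) - 1) / γ)
        = (Real.pi / 2) * Real.exp (γ / 4) * ((g : ℝ) - 1) := by
      field_simp; ring
    rw [step2] at step1
    refine step1.trans ?_
    have hg1 : (0 : ℝ) ≤ (g : ℝ) - 1 := by linarith
    nlinarith [Real.pi_pos, Real.exp_pos (γ / 4)]
  -- key numeric inequality
  have ha : (1 : ℝ) ≤ (g : ℝ) - 1 := by linarith
  have hpe : Real.pi * Real.exp 1 ≤ 3.15 * 2.7182818286 :=
    mul_le_mul hpi he (Real.exp_pos 1).le (by norm_num)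
  have hb : x ≤ 4.29 * ((g : ℝ) - 1) := by
    nlinarith [mul_le_mul_of_nonneg_right hpe (show (0:ℝ) ≤ (g:ℝ) - 1 by linarith)]
  have hc : (2 * x) ^ 2 ≤ 73.7 * ((g : ℝ) - 1) ^ 2 := by nlinarith
  have hd : ((g : ℝ) - 1) ^ 2 ≤ ((g : ℝ) - 1) ^ 3 := by nlinarith
  have hkey : (2 * x) ^ 2 ≤ (8 * (g : ℝ) - 7) ^ 3 := by nlinarith
  have h2x : (1 : ℝ) ≤ 2 * x := by linarith
  have hlog : Real.log ((2 * x) ^ 2) ≤ Real.log ((8 * (g : ℝ) - 7) ^ 3) :=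
    Real.log_le_log (by positivity) hkey
  rw [Real.log_pow, Real.log_pow] at hlog
  push_cast at hlog
  linarith
end

section
/- Let W' = arctanh(2/3). For every real a > 1.1, arcsinh((2√5/5)·sinh(a/2)/sqrt((9/5)·cosh(a/4)^2 − 1)) is such that 1/(π − 2·arcsin(1/cosh(of this quantity))) ≤ 3.1/3, i.e. 3/(π − 2·arcsin(1/cosh(w₂^Q))) ≤ 3.1 where sinh(w₂^Q) = (2√5/5)·sinh(a/2)/sqrt((9/5)·cosh(a/4)^2 − 1). -/
lemma sinh_w2_lb (a : ℝ) (ha : a > 1.1) :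
    (0.53 : ℝ) ≤ (2 * Real.sqrt 5 / 5) * Real.sinh (a / 2) /
        Real.sqrt ((9 / 5) * Real.cosh (a / 4) ^ 2 - 1) := by
  have ha' : (1.1 : ℝ) < a := ha
  set c := Real.cosh (a / 4) with hcdef
  have hc1 : (1 : ℝ) + a ^ 2 / 32 ≤ c := by
    have h1 : c = Real.cosh (a / 8) ^ 2 + Real.sinh (a / 8) ^ 2 := by
      rw [hcdef, show a / 4 = 2 * (a / 8) by ring, Real.cosh_two_mul]
    have h2 : Real.cosh (a / 8) ^ 2 = Real.sinh (a / 8) ^ 2 + 1 := Real.cosh_sq _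
    have h3 : a / 8 ≤ Real.sinh (a / 8) := Real.self_le_sinh_iff.mpr (by linarith)
    have h4 : c = 1 + 2 * Real.sinh (a / 8) ^ 2 := by rw [h1]; linarith
    nlinarith [h3, h4]
  have hcl : (1.0378125 : ℝ) ≤ c := by nlinarith
  have hcpos : (0 : ℝ) < c := by linarith
  set D := Real.sqrt ((9 / 5) * c ^ 2 - 1) with hDdef
  have hD2 : D ^ 2 = (9 / 5) * c ^ 2 - 1 := by
    rw [hDdef, Real.sq_sqrt]; nlinarith
  have hDpos : 0 < D := by
    rw [hDdef]; apply Real.sqrt_pos.mpr; nlinarith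
  set N := (2 * Real.sqrt 5 / 5) * Real.sinh (a / 2) with hNdef
  have hs4 : Real.sinh (a / 4) ^ 2 = c ^ 2 - 1 := by
    have := Real.cosh_sq (a / 4); rw [← hcdef] at this; linarith
  have hs4nn : 0 ≤ Real.sinh (a / 4) :=
    le_trans (by linarith) (Real.self_le_sinh_iff.mpr (by linarith))
  have hs2 : Real.sinh (a / 2) = 2 * Real.sinh (a / 4) * c := by
    rw [show a / 2 = 2 * (a / 4) by ring, Real.sinh_two_mul, hcdef]
  have hsqrt5 : Real.sqrt 5 ^ 2 = 5 := Real.sq_sqrt (by norm_num)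
  have hsqrt5nn : 0 ≤ Real.sqrt 5 := Real.sqrt_nonneg 5
  have hNnn : 0 ≤ N := by
    rw [hNdef, hs2]; positivity
  have hN2 : N ^ 2 = (16 / 5) * (c ^ 2 - 1) * c ^ 2 := by
    rw [hNdef, hs2]
    have e : (2 * Real.sqrt 5 / 5 * (2 * Real.sinh (a / 4) * c)) ^ 2 =
        Real.sqrt 5 ^ 2 * (4 / 25) * (4 * Real.sinh (a / 4) ^ 2 * c ^ 2) := by ring
    rw [e, hsqrt5, hs4]; ring
  have hkey : (0.53 : ℝ) ^ 2 * D ^ 2 ≤ N ^ 2 := by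
    rw [hN2, hD2]
    nlinarith [sq_nonneg (c - 1.0378125), sq_nonneg c]
  rw [le_div_iff₀ hDpos]
  nlinarith

lemma cosh_lb_of_sinh_lb (x : ℝ) (hx : (0.53 : ℝ) ≤ Real.sinh x) :
    (1.1317 : ℝ) ≤ Real.cosh x := by
  have h1 : Real.cosh x ^ 2 = Real.sinh x ^ 2 + 1 := Real.cosh_sq _
  have h2 : 0 < Real.cosh x := Real.cosh_pos x
  nlinarith

lemma cos_15_31_lb : (10000 : ℝ) / 11317 ≤ Real.cos (15 / 31) := by
  have hpi := Real.pi_gt_three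
  have h1 : Real.cos (15 / 31) = 1 - 2 * Real.sin (15 / 62) ^ 2 := by
    have e1 := Real.cos_two_mul (15 / 62 : ℝ)
    have e2 := Real.sin_sq_add_cos_sq (15 / 62 : ℝ)
    rw [show (15 : ℝ) / 31 = 2 * (15 / 62) by norm_num, e1]; linarith
  have h2 := Real.sin_bound (x := 15 / 62) (by rw [abs_of_pos] <;> norm_num)
  rw [abs_of_pos (by norm_num : (0:ℝ) < 15 / 62)] at h2
  have h3 := abs_le.mp h2
  have h4 : Real.sin (15 / 62) ≤ 15 / 62 - (15 / 62) ^ 3 / 6 + (15 / 62) ^ 4 * (5 / 96) := by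
    linarith [h3.2]
  have h5 : 0 ≤ Real.sin (15 / 62 : ℝ) :=
    Real.sin_nonneg_of_nonneg_of_le_pi (by norm_num) (by linarith)
  rw [h1]
  nlinarith [h4, h5]

theorem capacity_bound_case2b1 (a w₂ : ℝ) (ha : a > 1.1) (hw₂ : 0 ≤ w₂)
    (h : Real.sinh w₂ = (2 * Real.sqrt 5 / 5) * Real.sinh (a / 2) /
        Real.sqrt ((9 / 5) * Real.cosh (a / 4) ^ 2 - 1)) :
    3 / (Real.pi - 2 * Real.arcsin (1 / Real.cosh w₂)) ≤ 3.1 := by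
  have hpi := Real.pi_gt_d6
  have hpi' := Real.pi_lt_d2
  have hsinh : (0.53 : ℝ) ≤ Real.sinh w₂ := by rw [h]; exact sinh_w2_lb a ha
  -- cosh w₂ ≥ 1.1317
  have hcoshw : (1.1317 : ℝ) ≤ Real.cosh w₂ := cosh_lb_of_sinh_lb w₂ hsinh
  have hcoshpos : (0 : ℝ) < Real.cosh w₂ := by linarith
  -- t := 1 / cosh w₂ is at most 10000/11317
  have ht : 1 / Real.cosh w₂ ≤ 10000 / 11317 := by
    rw [div_le_div_iff₀ hcoshpos (by norm_num)]; linarith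
  have htpos : 0 < 1 / Real.cosh w₂ := by positivity
  -- cos (15/31) ≥ 10000/11317
  have hcos : (10000 : ℝ) / 11317 ≤ Real.cos (15 / 31) := cos_15_31_lb
  -- arcsin bound
  have harcs : Real.arcsin (1 / Real.cosh w₂) ≤ Real.pi / 2 - 15 / 31 := by
    have h1 : Real.arcsin (1 / Real.cosh w₂) ≤ Real.arcsin (Real.cos (15 / 31)) :=
      Real.monotone_arcsin (by linarith)
    have h2 : Real.arcsin (Real.cos (15 / 31)) = Real.pi / 2 - 15 / 31 := by
      rw [← Real.sin_pi_div_two_sub, Real.arcsin_sin (by linarith) (by linarith)]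
    linarith
  -- conclude
  have hden : (30 : ℝ) / 31 ≤ Real.pi - 2 * Real.arcsin (1 / Real.cosh w₂) := by linarith
  have hdenpos : (0 : ℝ) < Real.pi - 2 * Real.arcsin (1 / Real.cosh w₂) := by linarith
  rw [div_le_iff₀ hdenpos]
  nlinarith
end
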